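/- If the linear random dynamical system (θ, Φ) on ℝ^d admits an exponential dichotomy with growth rate γ ∈ ℝ and invariant projector P_γ, then for ℙ-almost every ω ∈ Ω: ker P_γ(ω) = {x ∈ ℝ^d : t ↦ Φ(t, ω)x is γ⁻-exponentially bounded} and range P_γ(ω) = {x ∈ ℝ^d : t ↦ Φ(t, ω)x is γ⁺-exponentially bounded}. -/

import Mathlib

open MeasureTheory Filter

noncomputable section

/-- A linear random dynamical system `(θ, Φ)` on `ℝ^d` over the probability space `(Ω, 𝓕, ℙ)`:
`θ` is a measure-preserving measurable dynamical system on `Ω`, and `Φ` is a measurable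
cocycle over `θ` taking values in the invertible continuous linear maps of `ℝ^d`. -/
structure LinRDS {Ω : Type*} [MeasurableSpace Ω] (ℙ : Measure Ω) (d : ℕ) where
  θ : ℝ → Ω → Ω
  Φ : ℝ → Ω → EuclideanSpace ℝ (Fin d) →L[ℝ] EuclideanSpace ℝ (Fin d)
  θ_meas : Measurable fun p : ℝ × Ω => θ p.1 p.2
  θ_zero : ∀ ω, θ 0 ω = ω
  θ_add : ∀ t s ω, θ (t + s) ω = θ t (θ s ω)
  θ_pres : ∀ t, MeasurePreserving (θ t) ℙ ℙ
  Φ_meas : ∀ x, Measurable fun p : ℝ × Ω => Φ p.1 p.2 x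
  Φ_zero : ∀ ω, Φ 0 ω = 1
  Φ_cocycle : ∀ t s ω, Φ (t + s) ω = Φ t (θ s ω) * Φ s ω
  Φ_isUnit : ∀ t ω, IsUnit (Φ t ω)

variable {Ω : Type*} [MeasurableSpace Ω] {ℙ : Measure Ω} {d : ℕ}

/-- The base of the linear random dynamical system is ergodic. -/
def LinRDS.IsErgodic (S : LinRDS ℙ d) : Prop :=
  ∀ A : Set Ω, MeasurableSet A → (∀ t, S.θ t ⁻¹' A = A) → ℙ A = 0 ∨ ℙ A = 1

/-- An invariant projector of a linear random dynamical system. -/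
def LinRDS.InvProjector (S : LinRDS ℙ d)
    (P : Ω → EuclideanSpace ℝ (Fin d) →L[ℝ] EuclideanSpace ℝ (Fin d)) : Prop :=
  (∀ x, Measurable fun ω => P ω x) ∧ (∀ ω, P ω * P ω = P ω) ∧
    ∀ t ω, P (S.θ t ω) * S.Φ t ω = S.Φ t ω * P ω

/-- `(θ, Φ)` admits an exponential dichotomy with growth rate `γ` and invariant projector `P`. -/
def LinRDS.IsED (S : LinRDS ℙ d) (γ : ℝ)
    (P : Ω → EuclideanSpace ℝ (Fin d) →L[ℝ] EuclideanSpace ℝ (Fin d)) : Prop :=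
  S.InvProjector P ∧ ∃ a > (0:ℝ), ∃ K ≥ (1:ℝ), ∀ᵐ ω ∂ℙ,
    (∀ t : ℝ, 0 ≤ t → ‖S.Φ t ω * P ω‖ ≤ K * Real.exp ((γ - a) * t)) ∧
    (∀ t : ℝ, t ≤ 0 → ‖S.Φ t ω * (1 - P ω)‖ ≤ K * Real.exp ((γ + a) * t))

/-- `(θ, Φ)` admits an exponential dichotomy with real growth rate `γ`. -/
def LinRDS.AdmitsED (S : LinRDS ℙ d) (γ : ℝ) : Prop :=
  ∃ P, S.IsED γ P

/-- `(θ, Φ)` admits an exponential dichotomy with extended-real growth rate `γ`; for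
`γ = ±∞` this means an exponential dichotomy with some real growth rate whose projector
is a.s. the identity (resp. a.s. zero). -/
def LinRDS.AdmitsEDE (S : LinRDS ℙ d) (γ : EReal) : Prop :=
  (∃ g : ℝ, γ = (g : EReal) ∧ S.AdmitsED g) ∨
  (γ = ⊤ ∧ ∃ g : ℝ, ∃ P, S.IsED g P ∧ ∀ᵐ ω ∂ℙ, P ω = 1) ∨
  (γ = ⊥ ∧ ∃ g : ℝ, ∃ P, S.IsED g P ∧ ∀ᵐ ω ∂ℙ, P ω = 0)

/-- The dichotomy spectrum of `(θ, Φ)`, a subset of the extended real line. -/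
def LinRDS.spectrum (S : LinRDS ℙ d) : Set EReal :=
  {γ | ¬ S.AdmitsEDE γ}

/-- The rank of a continuous linear map on `ℝ^d`. -/
def clmRank (P : EuclideanSpace ℝ (Fin d) →L[ℝ] EuclideanSpace ℝ (Fin d)) : ℕ :=
  Module.finrank ℝ (LinearMap.range
    (P : EuclideanSpace ℝ (Fin d) →ₗ[ℝ] EuclideanSpace ℝ (Fin d)))


private lemma LinRDS.inv_cocycle {Ω : Type*} [MeasurableSpace Ω] {ℙ : Measure Ω} {d : ℕ}
    (S : LinRDS ℙ d) (t : ℝ) (ω : Ω) :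
    S.Φ (-t) (S.θ t ω) * S.Φ t ω = 1 := by
  have h := S.Φ_cocycle (-t) t ω
  rw [neg_add_cancel, S.Φ_zero] at h
  exact h.symm

/-- If `(θ, Φ)` admits an exponential dichotomy with growth rate `γ` and
projector `P_γ`, then almost surely `ker P_γ(ω)` consists exactly of the points `x` whose
orbit `t ↦ Φ(t, ω) x` is `γ⁻`-exponentially bounded, and `range P_γ(ω)` of those whose
orbit is `γ⁺`-exponentially bounded. -/
theorem ker_range_of_ED_eq_exponentially_bounded
    {Ω : Type*} [MeasurableSpace Ω] {ℙ : Measure Ω} [IsProbabilityMeasure ℙ] {d : ℕ}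
    (S : LinRDS ℙ d) (γ : ℝ)
    (P : Ω → EuclideanSpace ℝ (Fin d) →L[ℝ] EuclideanSpace ℝ (Fin d))
    (hED : S.IsED γ P) :
    ∀ᵐ ω ∂ℙ,
      (∀ x : EuclideanSpace ℝ (Fin d),
        x ∈ LinearMap.ker (P ω : EuclideanSpace ℝ (Fin d) →ₗ[ℝ] EuclideanSpace ℝ (Fin d)) ↔
          ∃ C : ℝ, ∀ t : ℝ, t ≤ 0 → ‖S.Φ t ω x‖ * Real.exp (-γ * t) ≤ C) ∧
      (∀ x : EuclideanSpace ℝ (Fin d),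
        x ∈ LinearMap.range (P ω : EuclideanSpace ℝ (Fin d) →ₗ[ℝ] EuclideanSpace ℝ (Fin d)) ↔
          ∃ C : ℝ, ∀ t : ℝ, 0 ≤ t → ‖S.Φ t ω x‖ * Real.exp (-γ * t) ≤ C) := by
  obtain ⟨⟨hPmeas, hPidem, hPinv⟩, a, ha, K, hK, hae⟩ := hED
  have haeθ : ∀ s : ℝ, ∀ᵐ ω ∂ℙ,
      (∀ t : ℝ, 0 ≤ t → ‖S.Φ t (S.θ s ω) * P (S.θ s ω)‖ ≤ K * Real.exp ((γ - a) * t)) ∧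
      (∀ t : ℝ, t ≤ 0 → ‖S.Φ t (S.θ s ω) * (1 - P (S.θ s ω))‖ ≤ K * Real.exp ((γ + a) * t)) :=
    fun s => (S.θ_pres s).quasiMeasurePreserving.tendsto_ae.eventually hae
  have haeN : ∀ᵐ ω ∂ℙ, ∀ n : ℕ,
      (∀ t : ℝ, 0 ≤ t → ‖S.Φ t (S.θ (-(n:ℝ)) ω) * P (S.θ (-(n:ℝ)) ω)‖ ≤ K * Real.exp ((γ - a) * t)) ∧
      (∀ t : ℝ, t ≤ 0 → ‖S.Φ t (S.θ (n:ℝ) ω) * (1 - P (S.θ (n:ℝ) ω))‖ ≤ K * Real.exp ((γ + a) * t)) := by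
    rw [MeasureTheory.ae_all_iff]
    intro n
    filter_upwards [haeθ (-(n:ℝ)), haeθ (n:ℝ)] with ω h1 h2
    exact ⟨h1.1, h2.2⟩
  filter_upwards [hae, haeN] with ω hQ hQN
  have key1 : ∀ t : ℝ, S.Φ (-t) (S.θ t ω) * P (S.θ t ω) * S.Φ t ω = P ω := by
    intro t
    calc S.Φ (-t) (S.θ t ω) * P (S.θ t ω) * S.Φ t ω
        = S.Φ (-t) (S.θ t ω) * (P (S.θ t ω) * S.Φ t ω) := by rw [mul_assoc]
      _ = S.Φ (-t) (S.θ t ω) * S.Φ t ω * P ω := by rw [hPinv, mul_assoc]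
      _ = P ω := by rw [S.inv_cocycle, one_mul]
  have key2 : ∀ t : ℝ, S.Φ (-t) (S.θ t ω) * (1 - P (S.θ t ω)) * S.Φ t ω = 1 - P ω := by
    intro t
    have hinv' : (1 - P (S.θ t ω)) * S.Φ t ω = S.Φ t ω * (1 - P ω) := by
      rw [sub_mul, one_mul, hPinv, mul_sub, mul_one]
    calc S.Φ (-t) (S.θ t ω) * (1 - P (S.θ t ω)) * S.Φ t ω
        = S.Φ (-t) (S.θ t ω) * ((1 - P (S.θ t ω)) * S.Φ t ω) := by rw [mul_assoc]
      _ = S.Φ (-t) (S.θ t ω) * S.Φ t ω * (1 - P ω) := by rw [hinv', mul_assoc]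
      _ = 1 - P ω := by rw [S.inv_cocycle, one_mul]
  have hexp_decay : ∀ b : ℝ, ‖b‖ ≤ 0 → True := fun _ _ => trivial
  constructor
  · -- kernel characterization
    intro x
    constructor
    · intro hx
      have hx0 : P ω x = 0 := hx
      refine ⟨K * ‖x‖, fun t ht => ?_⟩
      have heq : S.Φ t ω x = (S.Φ t ω * (1 - P ω)) x := by
        simp [ContinuousLinearMap.mul_apply, ContinuousLinearMap.sub_apply, hx0]
      rw [heq]
      calc ‖(S.Φ t ω * (1 - P ω)) x‖ * Real.exp (-γ * t)
          ≤ (‖S.Φ t ω * (1 - P ω)‖ * ‖x‖) * Real.exp (-γ * t) := by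
            gcongr
            exact ContinuousLinearMap.le_opNorm _ _
        _ ≤ (K * Real.exp ((γ + a) * t) * ‖x‖) * Real.exp (-γ * t) := by
            gcongr
            exact hQ.2 t ht
        _ = K * ‖x‖ * (Real.exp ((γ + a) * t) * Real.exp (-γ * t)) := by ring
        _ = K * ‖x‖ * Real.exp ((γ + a) * t + -γ * t) := by rw [Real.exp_add]
        _ ≤ K * ‖x‖ * 1 := by
            have hKx : (0:ℝ) ≤ K * ‖x‖ := mul_nonneg (by linarith) (norm_nonneg x)
            have hexp1 : Real.exp ((γ + a) * t + -γ * t) ≤ 1 := by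
              rw [Real.exp_le_one_iff]
              nlinarith
            exact mul_le_mul_of_nonneg_left hexp1 hKx
        _ = K * ‖x‖ := mul_one _
    · rintro ⟨C, hC⟩
      have hC0 : ‖x‖ ≤ C := by
        have h := hC 0 le_rfl
        simpa [S.Φ_zero] using h
      have hCnn : (0:ℝ) ≤ C := le_trans (norm_nonneg x) hC0
      have hb : ∀ n : ℕ, ‖P ω x‖ ≤ K * C * Real.exp (-(a * n)) := by
        intro n
        have hkey := key1 (-(n:ℝ))
        rw [neg_neg] at hkey
        have hx1 : P ω x =
            (S.Φ (n:ℝ) (S.θ (-(n:ℝ)) ω) * P (S.θ (-(n:ℝ)) ω)) (S.Φ (-(n:ℝ)) ω x) := by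
          conv_lhs => rw [← hkey]
          simp [ContinuousLinearMap.mul_apply]
        have h1 : ‖S.Φ (n:ℝ) (S.θ (-(n:ℝ)) ω) * P (S.θ (-(n:ℝ)) ω)‖
            ≤ K * Real.exp ((γ - a) * n) := (hQN n).1 n (Nat.cast_nonneg n)
        have h2 : ‖S.Φ (-(n:ℝ)) ω x‖ ≤ C * Real.exp (γ * (-(n:ℝ))) := by
          have h := hC (-(n:ℝ)) (neg_nonpos.mpr (Nat.cast_nonneg n))
          have hE : (0:ℝ) < Real.exp (-γ * (-(n:ℝ))) := Real.exp_pos _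
          rw [← le_div_iff₀ hE] at h
          calc ‖S.Φ (-(n:ℝ)) ω x‖ ≤ C / Real.exp (-γ * (-(n:ℝ))) := h
            _ = C * Real.exp (-(-γ * (-(n:ℝ)))) := by
                rw [div_eq_mul_inv, ← Real.exp_neg]
            _ = C * Real.exp (γ * (-(n:ℝ))) := by congr 1; ring
        calc ‖P ω x‖
            = ‖(S.Φ (n:ℝ) (S.θ (-(n:ℝ)) ω) * P (S.θ (-(n:ℝ)) ω)) (S.Φ (-(n:ℝ)) ω x)‖ := by
              rw [← hx1]
          _ ≤ ‖S.Φ (n:ℝ) (S.θ (-(n:ℝ)) ω) * P (S.θ (-(n:ℝ)) ω)‖ * ‖S.Φ (-(n:ℝ)) ω x‖ :=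
              ContinuousLinearMap.le_opNorm _ _
          _ ≤ (K * Real.exp ((γ - a) * n)) * (C * Real.exp (γ * (-(n:ℝ)))) :=
              mul_le_mul h1 h2 (norm_nonneg _)
                (mul_nonneg (by linarith) (Real.exp_pos _).le)
          _ = K * C * (Real.exp ((γ - a) * n) * Real.exp (γ * (-(n:ℝ)))) := by ring
          _ = K * C * Real.exp ((γ - a) * n + γ * (-(n:ℝ))) := by rw [Real.exp_add]
          _ = K * C * Real.exp (-(a * n)) := by congr 1; ring
      have htend : Tendsto (fun n : ℕ => K * C * Real.exp (-(a * n))) atTop (nhds 0) := by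
        have h1 : Tendsto (fun n : ℕ => Real.exp (-a) ^ n) atTop (nhds 0) :=
          tendsto_pow_atTop_nhds_zero_of_lt_one (Real.exp_pos _).le
            (Real.exp_lt_one_iff.mpr (by linarith))
        have h2 : (fun n : ℕ => K * C * Real.exp (-(a * n)))
            = fun n : ℕ => K * C * Real.exp (-a) ^ n := by
          funext n
          rw [← Real.exp_nat_mul]
          congr 1
          ring
        rw [h2]
        simpa using h1.const_mul (K * C)
      have hle : ‖P ω x‖ ≤ 0 := ge_of_tendsto' htend hb
      exact norm_le_zero_iff.mp hle
  · -- range characterization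
    intro x
    constructor
    · rintro ⟨y, hy⟩
      have hy' : P ω y = x := hy
      have hPx : P ω x = x := by
        rw [← hy']
        have := congrArg (fun f : EuclideanSpace ℝ (Fin d) →L[ℝ] EuclideanSpace ℝ (Fin d)
          => f y) (hPidem ω)
        simpa [ContinuousLinearMap.mul_apply] using this
      refine ⟨K * ‖x‖, fun t ht => ?_⟩
      have heq : S.Φ t ω x = (S.Φ t ω * P ω) x := by
        simp [ContinuousLinearMap.mul_apply, hPx]
      rw [heq]
      calc ‖(S.Φ t ω * P ω) x‖ * Real.exp (-γ * t)
          ≤ (‖S.Φ t ω * P ω‖ * ‖x‖) * Real.exp (-γ * t) := by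
            gcongr
            exact ContinuousLinearMap.le_opNorm _ _
        _ ≤ (K * Real.exp ((γ - a) * t) * ‖x‖) * Real.exp (-γ * t) := by
            gcongr
            exact hQ.1 t ht
        _ = K * ‖x‖ * (Real.exp ((γ - a) * t) * Real.exp (-γ * t)) := by ring
        _ = K * ‖x‖ * Real.exp ((γ - a) * t + -γ * t) := by rw [Real.exp_add]
        _ ≤ K * ‖x‖ * 1 := by
            have hKx : (0:ℝ) ≤ K * ‖x‖ := mul_nonneg (by linarith) (norm_nonneg x)
            have hexp1 : Real.exp ((γ - a) * t + -γ * t) ≤ 1 := by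
              rw [Real.exp_le_one_iff]
              nlinarith
            exact mul_le_mul_of_nonneg_left hexp1 hKx
        _ = K * ‖x‖ := mul_one _
    · rintro ⟨C, hC⟩
      have hC0 : ‖x‖ ≤ C := by
        have h := hC 0 le_rfl
        simpa [S.Φ_zero] using h
      have hCnn : (0:ℝ) ≤ C := le_trans (norm_nonneg x) hC0
      have hb : ∀ n : ℕ, ‖(1 - P ω) x‖ ≤ K * C * Real.exp (-(a * n)) := by
        intro n
        have hkey := key2 (n:ℝ)
        have hx1 : (1 - P ω) x =
            (S.Φ (-(n:ℝ)) (S.θ (n:ℝ) ω) * (1 - P (S.θ (n:ℝ) ω))) (S.Φ (n:ℝ) ω x) := by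
          conv_lhs => rw [← hkey]
          simp [ContinuousLinearMap.mul_apply]
        have h1 : ‖S.Φ (-(n:ℝ)) (S.θ (n:ℝ) ω) * (1 - P (S.θ (n:ℝ) ω))‖
            ≤ K * Real.exp ((γ + a) * (-(n:ℝ))) :=
          (hQN n).2 (-(n:ℝ)) (neg_nonpos.mpr (Nat.cast_nonneg n))
        have h2 : ‖S.Φ (n:ℝ) ω x‖ ≤ C * Real.exp (γ * n) := by
          have h := hC (n:ℝ) (Nat.cast_nonneg n)
          have hE : (0:ℝ) < Real.exp (-γ * (n:ℝ)) := Real.exp_pos _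
          rw [← le_div_iff₀ hE] at h
          calc ‖S.Φ (n:ℝ) ω x‖ ≤ C / Real.exp (-γ * (n:ℝ)) := h
            _ = C * Real.exp (-(-γ * (n:ℝ))) := by rw [div_eq_mul_inv, ← Real.exp_neg]
            _ = C * Real.exp (γ * n) := by congr 1; ring
        calc ‖(1 - P ω) x‖
            = ‖(S.Φ (-(n:ℝ)) (S.θ (n:ℝ) ω) * (1 - P (S.θ (n:ℝ) ω))) (S.Φ (n:ℝ) ω x)‖ := by
              rw [← hx1]
          _ ≤ ‖S.Φ (-(n:ℝ)) (S.θ (n:ℝ) ω) * (1 - P (S.θ (n:ℝ) ω))‖ * ‖S.Φ (n:ℝ) ω x‖ :=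
              ContinuousLinearMap.le_opNorm _ _
          _ ≤ (K * Real.exp ((γ + a) * (-(n:ℝ)))) * (C * Real.exp (γ * n)) :=
              mul_le_mul h1 h2 (norm_nonneg _)
                (mul_nonneg (by linarith) (Real.exp_pos _).le)
          _ = K * C * (Real.exp ((γ + a) * (-(n:ℝ))) * Real.exp (γ * n)) := by ring
          _ = K * C * Real.exp ((γ + a) * (-(n:ℝ)) + γ * n) := by rw [Real.exp_add]
          _ = K * C * Real.exp (-(a * n)) := by congr 1; ring
      have htend : Tendsto (fun n : ℕ => K * C * Real.exp (-(a * n))) atTop (nhds 0) := by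
        have h1 : Tendsto (fun n : ℕ => Real.exp (-a) ^ n) atTop (nhds 0) :=
          tendsto_pow_atTop_nhds_zero_of_lt_one (Real.exp_pos _).le
            (Real.exp_lt_one_iff.mpr (by linarith))
        have h2 : (fun n : ℕ => K * C * Real.exp (-(a * n)))
            = fun n : ℕ => K * C * Real.exp (-a) ^ n := by
          funext n
          rw [← Real.exp_nat_mul]
          congr 1
          ring
        rw [h2]
        simpa using h1.const_mul (K * C)
      have hle : ‖(1 - P ω) x‖ ≤ 0 := ge_of_tendsto' htend hb
      have hz : (1 - P ω) x = 0 := norm_le_zero_iff.mp hle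
      refine ⟨x, ?_⟩
      have : x - P ω x = 0 := by
        simpa [ContinuousLinearMap.sub_apply] using hz
      have := sub_eq_zero.mp this
      exact this.symm


end
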